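/- Fix a ∈ [−1,1], μ > 0, γ > 1 and τ > 0. Let (v, u, S) be a C¹ solution of the relaxed system on an open set of (t,x) with v > 0 and 2τaS + μ > 0, and set W = (v, u, S)ᵀ ∈ ℝ³. Define the 3×3 matrices A⁰(W) = diag(γ v^{−γ−1}, 1, τv/(2τaS + μ)), A¹(W) with rows (0, −γ v^{−γ−1}, 0), (−γ v^{−γ−1}, 0, −1), (0, −1, 0), and B(W) = diag(0, 0, v/(2τaS + μ)). Then: (i) pointwise, A⁰(W) ∂_t W + A¹(W) ∂_x W + B(W) W = 0; and (ii) A⁰(W) and A¹(W) are symmetric and A⁰(W) is positive definite. -/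

import Mathlib

open MeasureTheory Filter Set intervalIntegral Matrix

noncomputable section

/-- Squared `H^k(ℝ)` norm: sum of the squared `L²` norms of the derivatives up to order `k`. -/
def HSq (k : ℕ) (f : ℝ → ℝ) : ℝ :=
  ∑ j ∈ Finset.range (k + 1), ∫ x : ℝ, (iteratedDeriv j f x) ^ 2

/-- Classical membership in `H^k(ℝ)`. -/
def MemH (k : ℕ) (f : ℝ → ℝ) : Prop :=
  ContDiff ℝ k f ∧ ∀ j ≤ k, Integrable fun x => (iteratedDeriv j f x) ^ 2

/-- Partial derivative in time. -/
def pt (f : ℝ → ℝ → ℝ) (t x : ℝ) : ℝ := deriv (fun s => f s x) t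

/-- Partial derivative in space. -/
def px (f : ℝ → ℝ → ℝ) (t x : ℝ) : ℝ := deriv (f t) x

/-- Continuity of `t ↦ f t` as an `H^k`-valued map on `I`. -/
def ContH (k : ℕ) (I : Set ℝ) (f : ℝ → ℝ → ℝ) : Prop :=
  ∀ s ∈ I, Tendsto (fun t => HSq k fun x => f t x - f s x) (nhdsWithin s I) (nhds 0)

/-- `f ∈ C⁰(I; H^k) ∩ C¹(I; H^(k-1))`. -/
def RegH (k : ℕ) (I : Set ℝ) (f : ℝ → ℝ → ℝ) : Prop :=
  (∀ t ∈ I, MemH k (f t)) ∧ ContH k I f ∧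
  (∀ x, ∀ t ∈ I, DifferentiableAt ℝ (fun s => f s x) t) ∧
  (∀ t ∈ I, MemH (k - 1) fun x => pt f t x) ∧ ContH (k - 1) I fun t x => pt f t x

/-- The 1-d isentropic compressible Navier–Stokes system with Oldroyd-type constitutive
law, in Lagrangian coordinates, at a point `(t, x)`:
`v_t = u_x`, `u_t + (v^(-γ))_x = S_x`, `τ (S_t - (2 a S / v) u_x) + S = μ u_x / v`. -/
def RelaxedSystem (a μ γ τ : ℝ) (v u S : ℝ → ℝ → ℝ) (t x : ℝ) : Prop :=
  pt v t x = px u t x ∧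
  pt u t x + deriv (fun y => v t y ^ (-γ)) x = px S t x ∧
  τ * (pt S t x - 2 * a * S t x / v t x * px u t x) + S t x = μ * px u t x / v t x

/-- The energy functional `E(t)`. -/
def En (τ : ℝ) (v u S : ℝ → ℝ → ℝ) (t : ℝ) : ℝ :=
  sSup ((fun s => HSq 2 (fun x => v s x - 1) + HSq 2 (u s) + τ * HSq 2 (S s)) '' Icc 0 t)

/-- The dissipation functional `D(t)`. -/
def Dn (v u S : ℝ → ℝ → ℝ) (t : ℝ) : ℝ :=
  HSq 1 (fun x => px v t x) + HSq 1 (fun x => px u t x) + HSq 2 (S t)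

/-- A solution of the relaxed system on `[0,T] × ℝ` in the class
`C⁰([0,T]; H²) ∩ C¹([0,T]; H¹)` with `v > 0` and `2τaS + μ > 0`. -/
def IsSolOn (a μ γ τ T : ℝ) (v u S : ℝ → ℝ → ℝ) : Prop :=
  (∀ t ∈ Icc (0 : ℝ) T, ∀ x : ℝ,
      0 < v t x ∧ 0 < 2 * τ * a * S t x + μ ∧ RelaxedSystem a μ γ τ v u S t x) ∧
  RegH 2 (Icc 0 T) (fun t x => v t x - 1) ∧ RegH 2 (Icc 0 T) u ∧ RegH 2 (Icc 0 T) S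


/-- The symmetrizer `A⁰(W) = diag(γ v^(-γ-1), 1, τv/(2τaS + μ))`. -/
def A0 (a μ γ τ : ℝ) (v S : ℝ) : Matrix (Fin 3) (Fin 3) ℝ :=
  !![γ * v ^ (-γ - 1), 0, 0;
     0, 1, 0;
     0, 0, τ * v / (2 * τ * a * S + μ)]

/-- The symmetric flux matrix `A¹(W)`. -/
def A1 (γ : ℝ) (v : ℝ) : Matrix (Fin 3) (Fin 3) ℝ :=
  !![0, -(γ * v ^ (-γ - 1)), 0;
     -(γ * v ^ (-γ - 1)), 0, -1;
     0, -1, 0]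

/-- The relaxation matrix `B(W) = diag(0, 0, v/(2τaS + μ))`. -/
def Bm (a μ τ : ℝ) (v S : ℝ) : Matrix (Fin 3) (Fin 3) ℝ :=
  !![0, 0, 0;
     0, 0, 0;
     0, 0, v / (2 * τ * a * S + μ)]

/-- The relaxed system is symmetric hyperbolic: a `C¹` solution `W = (v,u,S)ᵀ` with
`v > 0` and `2τaS + μ > 0` satisfies `A⁰(W) ∂ₜW + A¹(W) ∂ₓW + B(W) W = 0` pointwise,
with `A⁰(W)`, `A¹(W)` symmetric and `A⁰(W)` positive definite. -/
theorem symmetric_hyperbolic_form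
    (a μ γ τ : ℝ) (ha : a ∈ Icc (-1 : ℝ) 1) (hμ : 0 < μ) (hγ : 1 < γ) (hτ : 0 < τ)
    (U : Set (ℝ × ℝ)) (hU : IsOpen U) (v u S : ℝ → ℝ → ℝ)
    (hv : ContDiffOn ℝ 1 (fun p : ℝ × ℝ => v p.1 p.2) U)
    (hu : ContDiffOn ℝ 1 (fun p : ℝ × ℝ => u p.1 p.2) U)
    (hS : ContDiffOn ℝ 1 (fun p : ℝ × ℝ => S p.1 p.2) U)
    (hpos : ∀ t x, (t, x) ∈ U → 0 < v t x ∧ 0 < 2 * τ * a * S t x + μ)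
    (hsol : ∀ t x, (t, x) ∈ U → RelaxedSystem a μ γ τ v u S t x) :
    ∀ t x, (t, x) ∈ U →
      (A0 a μ γ τ (v t x) (S t x) *ᵥ ![pt v t x, pt u t x, pt S t x]
          + A1 γ (v t x) *ᵥ ![px v t x, px u t x, px S t x]
          + Bm a μ τ (v t x) (S t x) *ᵥ ![v t x, u t x, S t x] = 0) ∧
        (A0 a μ γ τ (v t x) (S t x))ᵀ = A0 a μ γ τ (v t x) (S t x) ∧
        (A1 γ (v t x))ᵀ = A1 γ (v t x) ∧
        (A0 a μ γ τ (v t x) (S t x)).PosDef := by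
  intro t x htx
  obtain ⟨hv0, hd0⟩ := hpos t x htx
  obtain ⟨e1, e2, e3⟩ := hsol t x htx
  -- spatial derivative of v t at x
  have hvx : DifferentiableAt ℝ (v t) x := by
    have h1 : DifferentiableAt ℝ (fun p : ℝ × ℝ => v p.1 p.2) (t, x) :=
      (hv.contDiffAt (hU.mem_nhds htx)).differentiableAt one_ne_zero
    have h2 : DifferentiableAt ℝ (fun y : ℝ => ((t, y) : ℝ × ℝ)) x := by fun_prop
    exact (h1.comp x h2 : _)
  have hder : HasDerivAt (v t) (px v t x) x := hvx.hasDerivAt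
  have hrpow : deriv (fun y => v t y ^ (-γ)) x = -γ * v t x ^ (-γ - 1) * px v t x := by
    have := (Real.hasDerivAt_rpow_const (p := -γ) (Or.inl hv0.ne')).comp x hder
    simpa [Function.comp_def, mul_comm, mul_left_comm, mul_assoc] using this.deriv
  refine ⟨?_, ?_, ?_, ?_⟩
  · have key : τ * v t x / (2 * τ * a * S t x + μ) * pt S t x - px u t x
        + v t x / (2 * τ * a * S t x + μ) * S t x = 0 := by
      have hv' := hv0.ne'
      have hd' := hd0.ne'
      have e3' : τ * v t x * pt S t x + v t x * S t x = px u t x * (2 * τ * a * S t x + μ) := by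
        field_simp at e3; linear_combination e3
      rw [div_mul_eq_mul_div, div_mul_eq_mul_div, sub_add_eq_add_sub, ← add_div, sub_eq_zero,
        div_eq_iff hd']
      linarith [e3']
    have row2 : pt u t x + -(γ * v t x ^ (-γ - 1)) * px v t x + -1 * px S t x
        + -(γ * v t x ^ (-γ - 1)) * px v t x * 0 = -(γ * v t x ^ (-γ - 1)) * px v t x * 0 := by
      rw [hrpow] at e2; ring_nf; ring_nf at e2; linarith
    funext i
    fin_cases i <;>
      simp [A0, A1, Bm, Matrix.mulVec, dotProduct, Fin.sum_univ_three,
        Matrix.vecHead, Matrix.vecTail] <;>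
      [(rw [e1]; ring); (rw [hrpow] at e2; nlinarith [e2]); (nlinarith [key])]
  · ext i j; fin_cases i <;> fin_cases j <;> simp [A0, Matrix.vecHead, Matrix.vecTail, Matrix.transpose_apply]
  · ext i j; fin_cases i <;> fin_cases j <;> simp [A1, Matrix.vecHead, Matrix.vecTail, Matrix.transpose_apply]
  · refine Matrix.PosDef.of_dotProduct_mulVec_pos ?_ ?_
    · ext i j; fin_cases i <;> fin_cases j <;> simp [A0, Matrix.conjTranspose, Matrix.vecHead, Matrix.vecTail, Matrix.transpose_apply]
    · intro w hw
      have h1 : 0 < γ * v t x ^ (-γ - 1) := by positivity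
      have h3 : 0 < τ * v t x / (2 * τ * a * S t x + μ) := by positivity
      have hcomp : w 0 ≠ 0 ∨ w 1 ≠ 0 ∨ w 2 ≠ 0 := by
        by_contra h
        push_neg at h
        apply hw
        funext i; fin_cases i <;> simp [h.1, h.2.1, h.2.2]
      simp only [A0, dotProduct, Matrix.mulVec, Fin.sum_univ_three,
        RCLike.star_def, starRingEnd_apply, star_trivial]
      have hq : w 0 * (!![γ * v t x ^ (-γ - 1), 0, 0; 0, 1, 0;
            0, 0, τ * v t x / (2 * τ * a * S t x + μ)] 0 0 * w 0 +
            !![γ * v t x ^ (-γ - 1), 0, 0; 0, 1, 0;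
            0, 0, τ * v t x / (2 * τ * a * S t x + μ)] 0 1 * w 1 +
            !![γ * v t x ^ (-γ - 1), 0, 0; 0, 1, 0;
            0, 0, τ * v t x / (2 * τ * a * S t x + μ)] 0 2 * w 2) +
          w 1 * (!![γ * v t x ^ (-γ - 1), 0, 0; 0, 1, 0;
            0, 0, τ * v t x / (2 * τ * a * S t x + μ)] 1 0 * w 0 +
            !![γ * v t x ^ (-γ - 1), 0, 0; 0, 1, 0;
            0, 0, τ * v t x / (2 * τ * a * S t x + μ)] 1 1 * w 1 +
            !![γ * v t x ^ (-γ - 1), 0, 0; 0, 1, 0;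
            0, 0, τ * v t x / (2 * τ * a * S t x + μ)] 1 2 * w 2) +
          w 2 * (!![γ * v t x ^ (-γ - 1), 0, 0; 0, 1, 0;
            0, 0, τ * v t x / (2 * τ * a * S t x + μ)] 2 0 * w 0 +
            !![γ * v t x ^ (-γ - 1), 0, 0; 0, 1, 0;
            0, 0, τ * v t x / (2 * τ * a * S t x + μ)] 2 1 * w 1 +
            !![γ * v t x ^ (-γ - 1), 0, 0; 0, 1, 0;
            0, 0, τ * v t x / (2 * τ * a * S t x + μ)] 2 2 * w 2)
          = γ * v t x ^ (-γ - 1) * w 0 ^ 2 + w 1 ^ 2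
            + τ * v t x / (2 * τ * a * S t x + μ) * w 2 ^ 2 := by
        simp [Matrix.vecHead, Matrix.vecTail]; ring
      rw [hq]
      have t2 : (0:ℝ) ≤ w 1 ^ 2 := sq_nonneg _
      have t1 : (0:ℝ) ≤ γ * v t x ^ (-γ - 1) * w 0 ^ 2 := mul_nonneg h1.le (sq_nonneg _)
      have t3 : (0:ℝ) ≤ τ * v t x / (2 * τ * a * S t x + μ) * w 2 ^ 2 :=
        mul_nonneg h3.le (sq_nonneg _)
      rcases hcomp with h | h | h
      · have := mul_pos h1 (sq_pos_of_ne_zero h); linarith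
      · have := sq_pos_of_ne_zero h; linarith
      · have := mul_pos h3 (sq_pos_of_ne_zero h); linarith
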